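/- Let a ∈ ℝ, b ∈ ℝ, q ≥ 0, z₀ ≥ 0, and T > 0. Then there exists a unique differentiable function M : [0,T] → ℝ satisfying the scalar Riccati equation Ṁ_t = 2a M_t − b² M_t² + q with M_0 = z₀; moreover M_t ≥ 0 for all t ∈ [0,T]. (In particular the Riccati equation does not blow up on any finite horizon.) -/

import Mathlib

open Set Real

/-- Global existence, uniqueness, and nonnegativity of the solution of the scalar
Riccati equation `Ṁ = 2aM − b²M² + q`, `M₀ = z₀ ≥ 0`, `q ≥ 0`, on any finite horizon
`[0, T]`. -/
theorem scalar_riccati_exists_unique_nonneg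
    (a b q z₀ T : ℝ) (hq : 0 ≤ q) (hz₀ : 0 ≤ z₀) (hT : 0 < T) :
    ∃ M : ℝ → ℝ,
      ((∀ t ∈ Set.Icc (0:ℝ) T,
          HasDerivWithinAt M (2 * a * M t - b ^ 2 * (M t) ^ 2 + q) (Set.Icc 0 T) t) ∧
        M 0 = z₀ ∧ ∀ t ∈ Set.Icc (0:ℝ) T, 0 ≤ M t) ∧
      ∀ M' : ℝ → ℝ,
        ((∀ t ∈ Set.Icc (0:ℝ) T,
            HasDerivWithinAt M' (2 * a * M' t - b ^ 2 * (M' t) ^ 2 + q) (Set.Icc 0 T) t) ∧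
          M' 0 = z₀) →
        ∀ t ∈ Set.Icc (0:ℝ) T, M' t = M t := by
  -- Explicit solution via linearization: M = x / y where (x, y) solves a linear system.
  set d : ℝ := Real.sqrt (a ^ 2 + b ^ 2 * q) with hd_def
  have hsum : (0:ℝ) ≤ a ^ 2 + b ^ 2 * q := by positivity
  have hd0 : 0 ≤ d := Real.sqrt_nonneg _
  have hd2 : d ^ 2 = a ^ 2 + b ^ 2 * q := Real.sq_sqrt hsum
  have hda : |a| ≤ d := by
    rw [hd_def, ← Real.sqrt_sq_eq_abs]
    exact Real.sqrt_le_sqrt (by nlinarith [sq_nonneg b, mul_nonneg (sq_nonneg b) hq])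
  set c : ℝ → ℝ := fun t => Real.cosh (d * t) with hc_def
  set s : ℝ → ℝ := fun t => if d = 0 then t else Real.sinh (d * t) / d with hs_def
  -- derivatives of c and s
  have hc' : ∀ t, HasDerivAt c (d ^ 2 * s t) t := by
    intro t
    have h1 : HasDerivAt (fun t : ℝ => d * t) d t := by
      simpa using (hasDerivAt_id t).const_mul d
    have h2 : HasDerivAt c (Real.sinh (d * t) * d) t :=
      (Real.hasDerivAt_cosh (d * t)).comp t h1
    convert h2 using 1
    by_cases hd : d = 0
    · simp [hs_def, hd]
    · simp only [hs_def, if_neg hd]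
      field_simp
  have hs' : ∀ t, HasDerivAt s (c t) t := by
    intro t
    by_cases hd : d = 0
    · simpa [hs_def, hc_def, hd] using (hasDerivAt_id' t)
    · have h1 : HasDerivAt (fun t : ℝ => d * t) d t := by
        simpa using (hasDerivAt_id t).const_mul d
      have h2 : HasDerivAt (fun t => Real.sinh (d * t)) (Real.cosh (d * t) * d) t :=
        (Real.hasDerivAt_sinh (d * t)).comp t h1
      have h3 : HasDerivAt (fun t => Real.sinh (d * t) / d) (Real.cosh (d * t) * d / d) t :=
        h2.div_const d
      have : Real.cosh (d * t) * d / d = c t := by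
        field_simp [hc_def]
        rfl
      rw [this] at h3
      convert h3 using 2
      simp [hs_def, hd]
  -- nonnegativity of s and the key positivity inequality
  have hs_nonneg : ∀ t, 0 ≤ t → 0 ≤ s t := by
    intro t ht
    by_cases hd : d = 0
    · simpa [hs_def, hd] using ht
    · have hdpos : 0 < d := lt_of_le_of_ne hd0 (Ne.symm hd)
      simp only [hs_def, if_neg hd]
      exact div_nonneg (Real.sinh_nonneg_iff.mpr (by positivity)) hd0
  have hkey : ∀ t, 0 ≤ t → 0 < c t - d * s t := by
    intro t ht
    by_cases hd : d = 0
    · simp [hs_def, hc_def, hd, Real.cosh_pos]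
    · simp only [hs_def, hc_def, if_neg hd]
      have : d * (Real.sinh (d * t) / d) = Real.sinh (d * t) := by field_simp
      rw [this]
      have h1 := Real.cosh_sub_sinh (d * t)
      have h2 := Real.exp_pos (-(d * t))
      linarith
  set x : ℝ → ℝ := fun t => c t * z₀ + s t * (a * z₀ + q) with hx_def
  set y : ℝ → ℝ := fun t => c t + s t * (b ^ 2 * z₀ - a) with hy_def
  have hb2z : (0:ℝ) ≤ b ^ 2 * z₀ := by positivity
  have hy_pos : ∀ t, 0 ≤ t → 0 < y t := by
    intro t ht
    have h1 := hkey t ht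
    have h2 := hs_nonneg t ht
    have h3 : 0 ≤ s t * (b ^ 2 * z₀ + (d - a)) :=
      mul_nonneg h2 (by cases abs_le.mp hda; nlinarith)
    simp only [hy_def]
    nlinarith
  have hx_nonneg : ∀ t, 0 ≤ t → 0 ≤ x t := by
    intro t ht
    have h1 := hkey t ht
    have h2 := hs_nonneg t ht
    obtain ⟨hda1, hda2⟩ := abs_le.mp hda
    have h3 : 0 ≤ z₀ * ((d + a) * s t) :=
      mul_nonneg hz₀ (mul_nonneg (by linarith) h2)
    have h4 : 0 ≤ q * s t := mul_nonneg hq h2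
    have h5 : 0 ≤ z₀ * (c t - d * s t) := mul_nonneg hz₀ h1.le
    simp only [hx_def]
    nlinarith
  -- derivatives of x and y
  have hx' : ∀ t, HasDerivAt x (a * x t + q * y t) t := by
    intro t
    have h := ((hc' t).mul_const z₀).add ((hs' t).mul_const (a * z₀ + q))
    refine h.congr_deriv (Eq.symm ?_)
    simp only [hx_def, hy_def]
    linear_combination (-(s t * z₀)) * hd2
  have hy' : ∀ t, HasDerivAt y (b ^ 2 * x t - a * y t) t := by
    intro t
    have h := (hc' t).add ((hs' t).mul_const (b ^ 2 * z₀ - a))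
    refine h.congr_deriv (Eq.symm ?_)
    simp only [hx_def, hy_def]
    linear_combination (-(s t)) * hd2
  set M : ℝ → ℝ := fun t => x t / y t with hM_def
  have hM' : ∀ t ∈ Set.Icc (0:ℝ) T,
      HasDerivAt M (2 * a * M t - b ^ 2 * (M t) ^ 2 + q) t := by
    intro t ht
    have hyt : y t ≠ 0 := (hy_pos t ht.1).ne'
    have h := (hx' t).div (hy' t) hyt
    refine h.congr_deriv (Eq.symm ?_)
    simp only [hM_def]
    field_simp
    ring
  have hM0 : M 0 = z₀ := by
    have hc0 : c 0 = 1 := by simp [hc_def]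
    have hs0 : s 0 = 0 := by by_cases hd : d = 0 <;> simp [hs_def, hd]
    simp [hM_def, hx_def, hy_def, hc0, hs0]
  have hMnonneg : ∀ t ∈ Set.Icc (0:ℝ) T, 0 ≤ M t := fun t ht =>
    div_nonneg (hx_nonneg t ht.1) (hy_pos t ht.1).le
  refine ⟨M, ⟨fun t ht => (hM' t ht).hasDerivWithinAt, hM0, hMnonneg⟩, ?_⟩
  -- Uniqueness via Grönwall
  rintro M' ⟨hM'deriv, hM'0⟩
  have hMcont : ContinuousOn M (Set.Icc 0 T) := fun t ht =>
    ((hM' t ht).continuousAt).continuousWithinAt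
  have hM'cont : ContinuousOn M' (Set.Icc 0 T) := fun t ht =>
    (hM'deriv t ht).continuousWithinAt
  obtain ⟨C₁, hC₁⟩ := isCompact_Icc.exists_bound_of_continuousOn hMcont
  obtain ⟨C₂, hC₂⟩ := isCompact_Icc.exists_bound_of_continuousOn hM'cont
  set C : ℝ := max C₁ C₂ with hC_def
  have hC0 : 0 ≤ C := le_trans (norm_nonneg (M 0)) (le_trans (hC₁ 0 ⟨le_refl 0, hT.le⟩) (le_max_left _ _))
  set K : ℝ := 2 * |a| + 2 * b ^ 2 * C with hK_def
  have hK0 : 0 ≤ K := by positivity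
  have hlip : ∀ t : ℝ, LipschitzOnWith (Real.toNNReal K)
      (fun m => 2 * a * m - b ^ 2 * m ^ 2 + q) (Metric.closedBall (0:ℝ) C) := by
    intro t
    rw [lipschitzOnWith_iff_dist_le_mul]
    intro m hm m' hm'
    rw [Metric.mem_closedBall, Real.dist_eq, sub_zero] at hm hm'
    rw [Real.dist_eq, Real.dist_eq]
    have h1 : (2 * a * m - b ^ 2 * m ^ 2 + q) - (2 * a * m' - b ^ 2 * m' ^ 2 + q)
        = (2 * a - b ^ 2 * (m + m')) * (m - m') := by ring
    rw [h1, abs_mul]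
    have h2 : |2 * a - b ^ 2 * (m + m')| ≤ K := by
      calc |2 * a - b ^ 2 * (m + m')| ≤ |2 * a| + |b ^ 2 * (m + m')| := abs_sub _ _
        _ ≤ 2 * |a| + b ^ 2 * (|m| + |m'|) := by
            rw [abs_mul, abs_mul, abs_two, abs_of_nonneg (sq_nonneg b)]
            gcongr
            exact abs_add_le _ _
        _ ≤ K := by rw [hK_def]; nlinarith [sq_nonneg b]
    have h3 : (Real.toNNReal K : ℝ) = K := Real.coe_toNNReal K hK0
    rw [h3]
    exact mul_le_mul_of_nonneg_right h2 (abs_nonneg _)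
  have hmem : ∀ t ∈ Set.Icc (0:ℝ) T, M t ∈ Metric.closedBall (0:ℝ) C := by
    intro t ht
    rw [Metric.mem_closedBall, Real.dist_eq, sub_zero]
    exact le_trans (hC₁ t ht) (le_max_left _ _)
  have hmem' : ∀ t ∈ Set.Icc (0:ℝ) T, M' t ∈ Metric.closedBall (0:ℝ) C := by
    intro t ht
    rw [Metric.mem_closedBall, Real.dist_eq, sub_zero]
    exact le_trans (hC₂ t ht) (le_max_right _ _)
  have hIcoIcc : Set.Ico (0:ℝ) T ⊆ Set.Icc 0 T := Set.Ico_subset_Icc_self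
  have huniq := ODE_solution_unique_of_mem_Icc_right
    (v := fun _ m => 2 * a * m - b ^ 2 * m ^ 2 + q)
    (s := fun _ => Metric.closedBall (0:ℝ) C) (K := Real.toNNReal K)
    (fun t _ => hlip t) hM'cont
    (fun t ht => (hM'deriv t (hIcoIcc ht)).mono_of_mem_nhdsWithin
      (Icc_mem_nhdsGE_of_mem ht))
    (fun t ht => hmem' t (hIcoIcc ht)) hMcont
    (fun t ht => ((hM' t (hIcoIcc ht)).hasDerivWithinAt).mono_of_mem_nhdsWithin
      (Icc_mem_nhdsGE_of_mem ht))
    (fun t ht => hmem t (hIcoIcc ht)) (by rw [hM'0, hM0])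
  exact fun t ht => huniq ht
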